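/- Let X = (X₁,...,X_N) be continuous random variables with joint density p, marginal densities p_i, marginal CDFs F_i, and copula density c on [0,1]^N defined by p(x) = c(F₁(x₁),...,F_N(x_N))·∏ᵢ pᵢ(xᵢ). Then the mutual information I(X) = ∫ p(x) log( p(x) / ∏ᵢ pᵢ(xᵢ) ) dx equals the negative copula entropy: I(X) = -H_c(X), where H_c(X) = -∫_{[0,1]^N} c(u) log c(u) du. -/
import Mathlib
open MeasureTheory Set Filter
open scoped ENNReal NNReal Topology

-- AUX

lemma lintegral_pi_prod_aux (n : ℕ) : ∀ (μ : Fin n → Measure ℝ) [∀ i, SigmaFinite (μ i)]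
    (g : Fin n → ℝ → ℝ≥0∞), (∀ i, Measurable (g i)) →
    (∫⁻ x, ∏ i, g i (x i) ∂Measure.pi μ) = ∏ i, ∫⁻ t, g i t ∂μ i := by
  induction n with
  | zero => intro μ _ g _; simp
  | succ n ih =>
      intro μ inst g hg
      have hmeas : Measurable fun x : Fin (n+1) → ℝ => ∏ i, g i (x i) :=
        Finset.measurable_prod _ fun i _ => (hg i).comp (measurable_pi_apply i)
      rw [← ((measurePreserving_piFinSuccAbove μ 0).symm).lintegral_comp hmeas]
      simp_rw [MeasurableEquiv.piFinSuccAbove_symm_apply, Fin.insertNthEquiv,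
        Fin.prod_univ_succ, Fin.insertNth_zero, Equiv.coe_fn_mk, Fin.cons_zero, Fin.cons_succ,
        Fin.zero_succAbove, cast_eq]
      rw [lintegral_prod_mul (f := g 0) (g := fun x : Fin n → ℝ => ∏ i, g i.succ (x i))
        (hg 0).aemeasurable
        ((Finset.measurable_prod _ fun i _ => (hg i.succ).comp (measurable_pi_apply i)).aemeasurable)]
      rw [ih (fun j => μ j.succ) (fun j => g j.succ) (fun j => hg j.succ)]

lemma restrict_pi_pi_aux {n : ℕ} (s : Fin n → Set ℝ) (hs : ∀ i, MeasurableSet (s i)) :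
    (volume : Measure (Fin n → ℝ)).restrict (Set.pi Set.univ s)
      = Measure.pi fun i => (volume : Measure ℝ).restrict (s i) := by
  refine (Measure.pi_eq fun t ht => ?_).symm
  rw [Measure.restrict_apply (MeasurableSet.univ_pi ht)]
  have h : Set.pi Set.univ t ∩ Set.pi Set.univ s = Set.pi Set.univ fun i => t i ∩ s i := by
    ext x; simp [Set.mem_pi, forall_and]
  rw [h, volume_pi_pi]
  exact Finset.prod_congr rfl fun i _ => (Measure.restrict_apply (ht i)).symm

lemma pi_withDensity_aux {n : ℕ} (g : Fin n → ℝ → ℝ≥0∞) (hg : ∀ i, Measurable (g i))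
    [∀ i, SigmaFinite ((volume : Measure ℝ).withDensity (g i))] :
    Measure.pi (fun i => (volume : Measure ℝ).withDensity (g i))
      = (volume : Measure (Fin n → ℝ)).withDensity fun x => ∏ i, g i (x i) := by
  refine Measure.pi_eq fun s hs => ?_
  rw [withDensity_apply _ (MeasurableSet.univ_pi hs)]
  rw [show ((volume : Measure (Fin n → ℝ)).restrict (Set.pi Set.univ s)) = Measure.pi fun i => (volume : Measure ℝ).restrict (s i) from restrict_pi_pi_aux s hs]
  rw [lintegral_pi_prod_aux n _ g hg]
  exact Finset.prod_congr rfl fun i _ => (withDensity_apply _ (hs i)).symm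

lemma map_pi_aux {n : ℕ} (μ ν : Fin n → Measure ℝ) [∀ i, SigmaFinite (μ i)] [∀ i, SigmaFinite (ν i)]
    (F : Fin n → ℝ → ℝ) (hFm : ∀ i, Measurable (F i))
    (h : ∀ i, Measure.map (F i) (μ i) = ν i) :
    Measure.map (fun x i => F i (x i)) (Measure.pi μ) = Measure.pi ν := by
  refine (Measure.pi_eq fun s hs => ?_).symm
  have hT : Measurable fun (x : Fin n → ℝ) i => F i (x i) :=
    measurable_pi_lambda _ fun i => (hFm i).comp (measurable_pi_apply i)
  rw [Measure.map_apply hT (MeasurableSet.univ_pi hs)]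
  have hpre : (fun x i => F i (x i)) ⁻¹' Set.pi Set.univ s = Set.pi Set.univ fun i => F i ⁻¹' s i := by
    ext x; simp [Set.mem_pi]
  rw [hpre, Measure.pi_pi]
  exact Finset.prod_congr rfl fun i _ => by rw [← h i, Measure.map_apply (hFm i) (hs i)]


lemma cdf_map_withDensity (f : ℝ → ℝ) (F : ℝ → ℝ)
    (hf_pos : ∀ t, 0 < f t) (hf_int : Integrable f) (hf1 : ∫ t, f t = 1)
    (hF : ∀ t, F t = ∫ s in Set.Iic t, f s) :
    Measure.map F (volume.withDensity (fun t => ENNReal.ofReal (f t)))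
      = volume.restrict (Set.Ioo (0:ℝ) 1) := by
  set μ : Measure ℝ := volume.withDensity (fun t => ENNReal.ofReal (f t)) with hμ
  have hnn : ∀ᵐ t : ℝ, 0 ≤ f t := Eventually.of_forall fun t => (hf_pos t).le
  -- strict monotonicity
  have hsm : StrictMono F := by
    intro a b hab
    have h2 : F b = F a + ∫ s in Set.Ioc a b, f s := by
      rw [hF, hF, ← setIntegral_union (Set.Iic_disjoint_Ioc le_rfl) measurableSet_Ioc
        hf_int.integrableOn hf_int.integrableOn, Set.Iic_union_Ioc_eq_Iic hab.le]
    have h3 : 0 < ∫ s in Set.Ioc a b, f s := by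
      rw [← intervalIntegral.integral_of_le hab.le]
      exact intervalIntegral.intervalIntegral_pos_of_pos_on hf_int.intervalIntegrable
        (fun x _ => hf_pos x) hab
    linarith
  have hFm : Measurable F := hsm.monotone.measurable
  -- continuity
  have hind : ∀ x, F x = ∫ a, Set.indicator (Set.Iic x) f a := by
    intro x; rw [integral_indicator measurableSet_Iic, hF]
  have hcont : Continuous F := by
    rw [continuous_iff_continuousAt]
    intro x₀
    have : ContinuousAt (fun x => ∫ a, Set.indicator (Set.Iic x) f a) x₀ := by
      apply continuousAt_of_dominated (bound := f)
      · exact Eventually.of_forall fun x => hf_int.1.indicator measurableSet_Iic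
      · refine Eventually.of_forall fun x => Eventually.of_forall fun a => ?_
        rw [Real.norm_eq_abs, abs_of_nonneg (Set.indicator_nonneg (fun t _ => (hf_pos t).le) a)]
        exact Set.indicator_le_self' (fun t _ => (hf_pos t).le) a
      · exact hf_int
      · have hne : ∀ᵐ a : ℝ, a ≠ x₀ := by
          refine ae_iff.mpr ?_
          simpa using measure_singleton x₀
        filter_upwards [hne] with a ha
        rcases lt_or_gt_of_ne ha with h | h
        · refine (continuousAt_const (y := f a)).congr ?_
          filter_upwards [isOpen_Ioi.mem_nhds (show a < x₀ from h)] with x hx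
          exact (Set.indicator_of_mem (Set.mem_Iic.mpr (le_of_lt hx)) f).symm
        · refine (continuousAt_const (y := (0:ℝ))).congr ?_
          filter_upwards [isOpen_Iio.mem_nhds (show x₀ < a from h)] with x hx
          exact (Set.indicator_of_notMem (by simp [Set.mem_Iic]; exact hx) f).symm
    exact this.congr (Eventually.of_forall fun x => (hind x).symm)
  -- bounds
  have hF0 : ∀ t, 0 < F t := by
    intro t
    rw [hF]
    refine (setIntegral_pos_iff_support_of_nonneg_ae ?_ hf_int.integrableOn).mpr ?_
    · exact Eventually.of_forall fun t => (hf_pos t).le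
    · have hsupp : Function.support f = Set.univ :=
        Set.eq_univ_of_forall fun t => (hf_pos t).ne'
      rw [hsupp, Set.univ_inter, Real.volume_Iic]
      simp
  have hF1 : ∀ t, F t < 1 := by
    intro t
    have hsplit : F t + ∫ s in Set.Ioi t, f s = 1 := by
      rw [hF, ← setIntegral_union (Set.Iic_disjoint_Ioi le_rfl) measurableSet_Ioi
        hf_int.integrableOn hf_int.integrableOn, Set.Iic_union_Ioi, setIntegral_univ, hf1]
    have hpos : 0 < ∫ s in Set.Ioi t, f s := by
      refine (setIntegral_pos_iff_support_of_nonneg_ae ?_ hf_int.integrableOn).mpr ?_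
      · exact Eventually.of_forall fun t => (hf_pos t).le
      · have hsupp : Function.support f = Set.univ :=
          Set.eq_univ_of_forall fun t => (hf_pos t).ne'
        rw [hsupp, Set.univ_inter, Real.volume_Ioi]
        simp
    linarith
  -- limits
  have hbot : Tendsto F atBot (𝓝 0) := by
    have h0 : (0:ℝ) = ∫ a : ℝ, (0:ℝ) := by simp
    have := tendsto_integral_filter_of_dominated_convergence (μ := (volume : Measure ℝ))
      (l := (atBot : Filter ℝ)) (F := fun x a => Set.indicator (Set.Iic x) f a)
      (f := fun _ => (0:ℝ)) f
      (Eventually.of_forall fun x => hf_int.1.indicator measurableSet_Iic)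
      (Eventually.of_forall fun x => Eventually.of_forall fun a => by
        rw [Real.norm_eq_abs, abs_of_nonneg (Set.indicator_nonneg (fun t _ => (hf_pos t).le) a)]
        exact Set.indicator_le_self' (fun t _ => (hf_pos t).le) a)
      hf_int
      (Eventually.of_forall fun a => by
        refine Tendsto.congr' ?_ tendsto_const_nhds
        filter_upwards [eventually_lt_atBot a] with x hx
        exact (Set.indicator_of_notMem (by simpa [Set.mem_Iic] using hx) f).symm)
    have h2 : Tendsto (fun x => ∫ a, Set.indicator (Set.Iic x) f a) atBot (𝓝 0) := by
      simpa using this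
    exact (funext hind : F = _) ▸ h2
  have htop : Tendsto F atTop (𝓝 1) := by
    have := tendsto_integral_filter_of_dominated_convergence (μ := (volume : Measure ℝ))
      (l := (atTop : Filter ℝ)) (F := fun x a => Set.indicator (Set.Iic x) f a)
      (f := f) f
      (Eventually.of_forall fun x => hf_int.1.indicator measurableSet_Iic)
      (Eventually.of_forall fun x => Eventually.of_forall fun a => by
        rw [Real.norm_eq_abs, abs_of_nonneg (Set.indicator_nonneg (fun t _ => (hf_pos t).le) a)]
        exact Set.indicator_le_self' (fun t _ => (hf_pos t).le) a)
      hf_int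
      (Eventually.of_forall fun a => by
        refine Tendsto.congr' ?_ tendsto_const_nhds
        filter_upwards [eventually_ge_atTop a] with x hx
        exact (Set.indicator_of_mem (Set.mem_Iic.mpr hx) f).symm)
    have h2 : Tendsto (fun x => ∫ a, Set.indicator (Set.Iic x) f a) atTop (𝓝 1) := by
      rw [hf1] at this; exact this
    exact (funext hind : F = _) ▸ h2
  -- probability measure
  have hμuniv : μ Set.univ = 1 := by
    rw [hμ, withDensity_apply _ MeasurableSet.univ, setLIntegral_univ,
      ← ofReal_integral_eq_lintegral_ofReal hf_int hnn, hf1, ENNReal.ofReal_one]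
  haveI : IsProbabilityMeasure μ := ⟨hμuniv⟩
  haveI : IsProbabilityMeasure (Measure.map F μ) := Measure.isProbabilityMeasure_map hFm.aemeasurable
  -- extensionality on Iic
  refine Measure.ext_of_Iic (Measure.map F μ) _ fun y => ?_
  rw [Measure.map_apply hFm measurableSet_Iic, Measure.restrict_apply measurableSet_Iic]
  rcases le_or_gt y 0 with hy0 | hy0
  · have h1 : F ⁻¹' Set.Iic y = ∅ := by
      refine Set.eq_empty_iff_forall_notMem.mpr fun t ht => ?_
      exact absurd (Set.mem_Iic.mp ht) (not_le.mpr (lt_of_le_of_lt hy0 (hF0 t)))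
    have h2 : Set.Iic y ∩ Set.Ioo (0:ℝ) 1 = ∅ := by
      refine Set.eq_empty_iff_forall_notMem.mpr fun x hx => ?_
      exact absurd (lt_of_le_of_lt (le_trans hx.1 hy0) hx.2.1) (lt_irrefl x)
    rw [h1, h2]; simp
  · rcases lt_or_ge y 1 with hy1 | hy1
    · -- 0 < y < 1 : find t with F t = y
      obtain ⟨t₀, ht₀⟩ : ∃ t, F t < y := (hbot.eventually_lt_const hy0).exists
      obtain ⟨t₁, ht₁⟩ : ∃ t, y < F t := (htop.eventually_const_lt hy1).exists
      have htt : t₀ ≤ t₁ := le_of_lt (hsm.lt_iff_lt.mp (lt_trans ht₀ ht₁))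
      obtain ⟨t, -, hFt⟩ := intermediate_value_Icc htt hcont.continuousOn
        (Set.mem_Icc.mpr ⟨ht₀.le, ht₁.le⟩)
      have h1 : F ⁻¹' Set.Iic y = Set.Iic t := by
        ext s
        simp only [Set.mem_preimage, Set.mem_Iic]
        constructor
        · intro h
          by_contra hst
          push_neg at hst
          exact absurd (lt_of_lt_of_le (hsm hst) (hFt ▸ h)) (lt_irrefl _)
        · intro h
          exact hFt ▸ (hsm.monotone h)
      have h2 : Set.Iic y ∩ Set.Ioo (0:ℝ) 1 = Set.Ioc 0 y := by
        ext x
        simp only [Set.mem_inter_iff, Set.mem_Iic, Set.mem_Ioo, Set.mem_Ioc]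
        exact ⟨fun h => ⟨h.2.1, h.1⟩, fun h => ⟨h.2, h.1, lt_of_le_of_lt h.2 hy1⟩⟩
      rw [h1, h2, hμ, withDensity_apply _ measurableSet_Iic,
        ← ofReal_integral_eq_lintegral_ofReal hf_int.integrableOn
          (Eventually.of_forall fun t => (hf_pos t).le),
        ← hF, hFt, Real.volume_Ioc]
      simp
    · -- 1 ≤ y
      have h1 : F ⁻¹' Set.Iic y = Set.univ :=
        Set.eq_univ_of_forall fun t => Set.mem_Iic.mpr (le_trans (hF1 t).le hy1)
      have h2 : Set.Iic y ∩ Set.Ioo (0:ℝ) 1 = Set.Ioo 0 1 :=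
        Set.inter_eq_right.mpr fun x hx => Set.mem_Iic.mpr (le_trans hx.2.le hy1)
      rw [h1, h2, hμuniv, Real.volume_Ioo]
      simp

section Main
/-- Mutual information equals negative copula entropy. -/
theorem mi_eq_neg_copula_entropy (N : ℕ)
    (p : (Fin N → ℝ) → ℝ) (c : (Fin N → ℝ) → ℝ)
    (pm : Fin N → ℝ → ℝ) (F : Fin N → ℝ → ℝ)
    (hp_pos : ∀ x, 0 < p x)
    (hpm_pos : ∀ i t, 0 < pm i t)
    (hp1 : ∫ x, p x = 1)
    (hpm1 : ∀ i, ∫ t, pm i t = 1)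
    (hF : ∀ i t, F i t = ∫ s in Set.Iic t, pm i s)
    (hcop : ∀ x, p x = c (fun i => F i (x i)) * ∏ i, pm i (x i))
    (hint1 : Integrable fun x => p x * Real.log (p x / ∏ i, pm i (x i)))
    (hint2 : IntegrableOn (fun u => c u * Real.log (c u)) (Set.Icc (0 : Fin N → ℝ) 1)) :
    ∫ x, p x * Real.log (p x / ∏ i, pm i (x i)) =
      -(-(∫ u in Set.Icc (0 : Fin N → ℝ) 1, c u * Real.log (c u))) := by
  rw [neg_neg]
  have hpm_int : ∀ i, Integrable (pm i) := by
    intro i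
    by_contra h
    have := hpm1 i
    rw [integral_undef h] at this
    exact zero_ne_one this
  -- monotonicity and measurability of the CDFs
  have hFmono : ∀ i, Monotone (F i) := by
    intro i a b hab
    rw [hF i a, hF i b]
    exact setIntegral_mono_set (hpm_int i).integrableOn
      (Eventually.of_forall fun t => (hpm_pos i t).le)
      (HasSubset.Subset.eventuallyLE (Set.Iic_subset_Iic.mpr hab))
  have hFm : ∀ i, Measurable (F i) := fun i => (hFmono i).measurable
  have hTm : Measurable (fun (x : Fin N → ℝ) i => F i (x i)) :=
    measurable_pi_lambda _ fun i => (hFm i).comp (measurable_pi_apply i)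
  -- pushforward of each marginal
  have hmap : ∀ i, Measure.map (F i) (volume.withDensity fun t => ENNReal.ofReal (pm i t))
      = volume.restrict (Set.Ioo 0 1) := fun i =>
    cdf_map_withDensity (pm i) (F i) (hpm_pos i) (hpm_int i) (hpm1 i) (hF i)
  -- measurable representatives of the marginal densities
  have hqex : ∀ i, ∃ q : ℝ → ℝ, Measurable q ∧ pm i =ᵐ[volume] q := fun i =>
    ⟨(hpm_int i).1.aemeasurable.mk _, (hpm_int i).1.aemeasurable.measurable_mk,
      (hpm_int i).1.aemeasurable.ae_eq_mk⟩
  choose q hq_meas hq_ae using hqex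
  -- the marginal measures
  have hμd_eq : ∀ i, (volume.withDensity fun t => ENNReal.ofReal (q i t))
      = volume.withDensity fun t => ENNReal.ofReal (pm i t) :=
    fun i => (withDensity_congr_ae ((hq_ae i).fun_comp ENNReal.ofReal)).symm
  haveI hμdP : ∀ i, IsProbabilityMeasure (volume.withDensity fun t => ENNReal.ofReal (q i t)) := by
    intro i
    constructor
    rw [hμd_eq i, withDensity_apply _ MeasurableSet.univ, setLIntegral_univ,
      ← ofReal_integral_eq_lintegral_ofReal (hpm_int i)
        (Eventually.of_forall fun t => (hpm_pos i t).le), hpm1 i, ENNReal.ofReal_one]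
  haveI hμdS : ∀ i, SigmaFinite (volume.withDensity fun t => ENNReal.ofReal (q i t)) :=
    fun i => inferInstance
  -- the pi measure as a withDensity
  have hpiμ : Measure.pi (fun i => volume.withDensity fun t => ENNReal.ofReal (q i t))
      = volume.withDensity (fun x : Fin N → ℝ => ∏ i, ENNReal.ofReal (q i (x i))) :=
    pi_withDensity_aux (fun i t => ENNReal.ofReal (q i t))
      (fun i => ENNReal.measurable_ofReal.comp (hq_meas i))
  -- pushforward of the pi measure
  have hmapT : Measure.map (fun (x : Fin N → ℝ) i => F i (x i))
        (Measure.pi (fun i => volume.withDensity fun t => ENNReal.ofReal (q i t)))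
      = volume.restrict (Set.pi Set.univ fun _ => Set.Ioo (0:ℝ) 1) := by
    rw [map_pi_aux _ (fun _ => volume.restrict (Set.Ioo (0:ℝ) 1)) F hFm
      (fun i => by rw [hμd_eq i]; exact hmap i)]
    exact (restrict_pi_pi_aux _ fun _ => measurableSet_Ioo).symm
  -- a.e. agreement of q and pm on the pi space
  have haeq : ∀ᵐ x : (Fin N → ℝ), ∀ i, pm i (x i) = q i (x i) := by
    rw [ae_all_iff]
    intro i
    rw [show (volume : Measure (Fin N → ℝ)) = Measure.pi fun _ => volume from volume_pi]
    exact (Measure.tendsto_eval_ae_ae (μ := fun _ : Fin N => (volume : Measure ℝ))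
      (i := i)).eventually (hq_ae i)
  -- pointwise identity
  have key : ∀ᵐ x : (Fin N → ℝ), p x * Real.log (p x / ∏ i, pm i (x i))
      = (Real.toNNReal (∏ i, q i (x i))) •
        ((fun u => c u * Real.log (c u)) ((fun (x : Fin N → ℝ) i => F i (x i)) x)) := by
    filter_upwards [haeq] with x hx
    have hpP : 0 < ∏ i, pm i (x i) := Finset.prod_pos fun i _ => hpm_pos i (x i)
    have hqq : ∏ i, q i (x i) = ∏ i, pm i (x i) :=
      Finset.prod_congr rfl fun i _ => (hx i).symm
    have hdiv : p x / ∏ i, pm i (x i) = c (fun i => F i (x i)) := by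
      rw [hcop x]; field_simp
    rw [hdiv, hcop x, NNReal.smul_def, Real.coe_toNNReal _ (hqq ▸ hpP.le), hqq, smul_eq_mul]
    ring
  -- the density as an NNReal function
  have hDmeas : Measurable fun x : Fin N → ℝ => Real.toNNReal (∏ i, q i (x i)) :=
    measurable_real_toNNReal.comp
      (Finset.measurable_prod _ fun i _ => (hq_meas i).comp (measurable_pi_apply i))
  -- identify the withDensity measures
  have hwd : volume.withDensity
        (fun x : Fin N → ℝ => ((Real.toNNReal (∏ i, q i (x i)) : ℝ≥0) : ℝ≥0∞))
      = volume.withDensity (fun x : Fin N → ℝ => ∏ i, ENNReal.ofReal (q i (x i))) := by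
    refine withDensity_congr_ae ?_
    filter_upwards [haeq] with x hx
    have hqq : ∀ i, q i (x i) = pm i (x i) := fun i => (hx i).symm
    simp only [hqq]
    rw [← ENNReal.ofReal_prod_of_nonneg fun i _ => (hpm_pos i (x i)).le]
    rfl
  -- measurability of the integrand on the image
  have hsub : Set.pi Set.univ (fun _ : Fin N => Set.Ioo (0:ℝ) 1)
      ⊆ Set.Icc (0 : Fin N → ℝ) 1 := by
    rw [show Set.Icc (0 : Fin N → ℝ) 1 = Set.pi Set.univ fun _ => Set.Icc (0:ℝ) 1 from
      (Set.pi_univ_Icc _ _).symm]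
    exact Set.pi_mono fun i _ => Set.Ioo_subset_Icc_self
  have hgm : AEStronglyMeasurable (fun u => c u * Real.log (c u))
      (volume.restrict (Set.pi Set.univ fun _ : Fin N => Set.Ioo (0:ℝ) 1)) :=
    hint2.aestronglyMeasurable.mono_measure (Measure.restrict_mono hsub le_rfl)
  -- the sets Ioo-pi and Icc agree a.e.
  have hset_ae : (Set.pi Set.univ fun _ : Fin N => Set.Ioo (0:ℝ) 1)
      =ᵐ[volume] Set.Icc (0 : Fin N → ℝ) 1 := by
    rw [MeasureTheory.ae_eq_set]
    constructor
    · rw [Set.diff_eq_empty.mpr hsub]; simp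
    · have hnull : (volume : Measure (Fin N → ℝ))
          (⋃ i, ({y : Fin N → ℝ | y i = 0} ∪ {y : Fin N → ℝ | y i = 1})) = 0 := by
        refine measure_iUnion_null fun i => measure_union_null ?_ ?_
        · rw [volume_pi]; exact Measure.pi_hyperplane _ i 0
        · rw [volume_pi]; exact Measure.pi_hyperplane _ i 1
      refine measure_mono_null (fun x hx => ?_) hnull
      obtain ⟨hxI, hxP⟩ := hx
      rw [Set.mem_Icc] at hxI
      simp only [Set.mem_pi, Set.mem_univ, forall_true_left, not_forall] at hxP
      obtain ⟨i, hi⟩ := hxP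
      refine Set.mem_iUnion.mpr ⟨i, ?_⟩
      have h0 : (0:ℝ) ≤ x i := hxI.1 i
      have h1 : x i ≤ 1 := hxI.2 i
      rw [Set.mem_Ioo] at hi
      push_neg at hi
      rcases eq_or_lt_of_le h0 with h | h
      · exact Set.mem_union_left _ (by simpa using h.symm)
      · exact Set.mem_union_right _ (by simpa using le_antisymm h1 (hi h))
  -- main calculation
  calc ∫ x, p x * Real.log (p x / ∏ i, pm i (x i))
      = ∫ x : Fin N → ℝ, (Real.toNNReal (∏ i, q i (x i))) •
          ((fun u => c u * Real.log (c u)) (fun i => F i (x i))) := integral_congr_ae key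
    _ = ∫ x : Fin N → ℝ, (fun u => c u * Real.log (c u)) (fun i => F i (x i))
          ∂(volume.withDensity
            (fun x : Fin N → ℝ => ((Real.toNNReal (∏ i, q i (x i)) : ℝ≥0) : ℝ≥0∞))) :=
        (integral_withDensity_eq_integral_smul hDmeas _).symm
    _ = ∫ x : Fin N → ℝ, (fun u => c u * Real.log (c u)) (fun i => F i (x i))
          ∂(Measure.pi (fun i => volume.withDensity fun t => ENNReal.ofReal (q i t))) := by
        rw [hwd, ← hpiμ]
    _ = ∫ u, (fun u => c u * Real.log (c u)) u
          ∂(Measure.map (fun (x : Fin N → ℝ) i => F i (x i))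
            (Measure.pi (fun i => volume.withDensity fun t => ENNReal.ofReal (q i t)))) := by
        rw [integral_map hTm.aemeasurable (hmapT ▸ hgm)]
    _ = ∫ u in Set.pi Set.univ (fun _ : Fin N => Set.Ioo (0:ℝ) 1),
          c u * Real.log (c u) := by rw [hmapT]
    _ = ∫ u in Set.Icc (0 : Fin N → ℝ) 1, c u * Real.log (c u) :=
        setIntegral_congr_set hset_ae
end Main
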